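/- arXiv:1207.1323 — 2 statements merged into one kernel-verified Lean document; each statement's English description precedes it below -/
import Mathlib

section
/- Let A be a torsion-free abelian group and H a finite group acting on A by automorphisms such that every nontrivial h ∈ H fixes only the zero element of A. Then for every nonzero b ∈ A and every positive integer s, the constant sequence (b, b, …, b) of length s is H-independent. -/
instance instCoeFunMultAddAut {A : Type*} [AddCommGroup A] :
    CoeFun (Multiplicative (AddAut A)) (fun _ => A → A) :=
  ⟨fun f a => Multiplicative.toAdd f a⟩

section Aux

variable {A : Type*} [AddCommGroup A] {H : Type*} [Group H] [Fintype H]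
  (σ : H →* Multiplicative (AddAut A)) (b : A)

/-- The `ℤ`-span of the `H`-orbit of `b`. -/
def orbitSpan : Submodule ℤ A := Submodule.span ℤ (Set.range fun g : H => σ g b)

lemma mem_orbitSpan (g : H) : σ g b ∈ orbitSpan σ b := Submodule.subset_span ⟨g, rfl⟩

lemma b_mem_orbitSpan : b ∈ orbitSpan σ b := by
  simpa using mem_orbitSpan σ b 1

lemma orbitSpan_inv (g : H) : ∀ x ∈ orbitSpan σ b,
    ((Multiplicative.toAdd (σ g) : A ≃+ A).toAddMonoidHom.toIntLinearMap) x ∈ orbitSpan σ b := by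
  intro x hx
  have : Submodule.map ((Multiplicative.toAdd (σ g) : A ≃+ A).toAddMonoidHom.toIntLinearMap) (orbitSpan σ b)
      ≤ orbitSpan σ b := by
    rw [orbitSpan, Submodule.map_span]
    apply Submodule.span_le.mpr
    rintro _ ⟨_, ⟨g', rfl⟩, rfl⟩
    show σ g (σ g' b) ∈ orbitSpan σ b
    have hgg : σ g (σ g' b) = σ (g * g') b := by
      rw [map_mul]; rfl
    rw [hgg]
    exact mem_orbitSpan σ b (g * g')
  exact this ⟨x, hx, rfl⟩

/-- The action of `g` restricted to the orbit span. -/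
def rho (g : H) : orbitSpan σ b →ₗ[ℤ] orbitSpan σ b :=
  LinearMap.restrict _ (orbitSpan_inv σ b g)

lemma coe_rho (g : H) (x : orbitSpan σ b) : (rho σ b g x : A) = σ g (x : A) := rfl

lemma rho_rho (g g' : H) (x : orbitSpan σ b) :
    rho σ b g (rho σ b g' x) = rho σ b (g * g') x := by
  apply Subtype.ext
  simp only [coe_rho, map_mul]
  rfl

lemma rho_one (x : orbitSpan σ b) : rho σ b 1 x = x := by
  apply Subtype.ext
  simp [coe_rho]

variable {ι : Type*} [Fintype ι] (c : Module.Basis ι ℤ (orbitSpan σ b))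

/-- An `H`-invariant positive definite bilinear form on the orbit span. -/
noncomputable def Bform : orbitSpan σ b →ₗ[ℤ] orbitSpan σ b →ₗ[ℤ] ℤ :=
  LinearMap.mk₂ ℤ
    (fun x y => ∑ g : H, ∑ i, c.repr (rho σ b g x) i * c.repr (rho σ b g y) i)
    (by intro x x' y
        simp [map_add, Finsupp.add_apply, add_mul, Finset.sum_add_distrib])
    (by intro a x y
        simp [map_smul, Finsupp.smul_apply, smul_eq_mul, Finset.mul_sum, mul_assoc])
    (by intro x y y'
        simp [map_add, Finsupp.add_apply, mul_add, Finset.sum_add_distrib])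
    (by intro a x y
        simp [map_smul, Finsupp.smul_apply, smul_eq_mul, Finset.mul_sum]
        congr 1; ext g; congr 1; ext i; ring)

lemma Bform_apply (x y : orbitSpan σ b) :
    Bform σ b c x y = ∑ g : H, ∑ i, c.repr (rho σ b g x) i * c.repr (rho σ b g y) i := rfl

lemma Bform_nonneg (x : orbitSpan σ b) : 0 ≤ Bform σ b c x x := by
  rw [Bform_apply]
  apply Finset.sum_nonneg
  intro g _
  apply Finset.sum_nonneg
  intro i _
  exact mul_self_nonneg _

lemma Bform_eq_zero (x : orbitSpan σ b) (hx : Bform σ b c x x = 0) : x = 0 := by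
  rw [Bform_apply] at hx
  have h1 : ∑ i, c.repr (rho σ b 1 x) i * c.repr (rho σ b 1 x) i = 0 := by
    have := (Finset.sum_eq_zero_iff_of_nonneg (fun g _ => Finset.sum_nonneg
      (fun i _ => mul_self_nonneg _))).mp hx 1 (Finset.mem_univ _)
    exact this
  rw [rho_one] at h1
  have h2 : ∀ i, c.repr x i = 0 := by
    intro i
    have := (Finset.sum_eq_zero_iff_of_nonneg (fun i _ => mul_self_nonneg _)).mp h1 i
      (Finset.mem_univ _)
    exact mul_self_eq_zero.mp this
  have : c.repr x = 0 := Finsupp.ext h2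
  exact (LinearEquiv.map_eq_zero_iff c.repr).mp this

lemma Bform_invariant (g : H) (x y : orbitSpan σ b) :
    Bform σ b c (rho σ b g x) (rho σ b g y) = Bform σ b c x y := by
  rw [Bform_apply, Bform_apply]
  have : ∀ g' : H, (∑ i, c.repr (rho σ b g' (rho σ b g x)) i *
      c.repr (rho σ b g' (rho σ b g y)) i)
      = ∑ i, c.repr (rho σ b (g' * g) x) i * c.repr (rho σ b (g' * g) y) i := by
    intro g'; rw [rho_rho, rho_rho]
  simp only [this]
  exact Equiv.sum_comp (Equiv.mulRight g)
    (fun g' => ∑ i, c.repr (rho σ b g' x) i * c.repr (rho σ b g' y) i)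

lemma key {A : Type*} [AddCommGroup A] [NoZeroSMulDivisors ℤ A]
    {H : Type*} [Group H] [Fintype H] (σ : H →* Multiplicative (AddAut A)) (b : A)
    {m : ℕ} (h : Fin m → H)
    (heq : ∑ _j : Fin m, b = ∑ j, σ (h j) b) (j : Fin m) : σ (h j) b = b := by
  haveI : Module.Finite ℤ (orbitSpan σ b) :=
    Module.Finite.span_of_finite ℤ (Set.finite_range _)
  haveI : Module.Free ℤ (orbitSpan σ b) := Module.free_of_finite_type_torsion_free'
  let c := Module.Free.chooseBasis ℤ (orbitSpan σ b)
  set M := orbitSpan σ b with hM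
  let bm : M := ⟨b, b_mem_orbitSpan σ b⟩
  let u : Fin m → M := fun j => rho σ b (h j) bm
  have hucoe : ∀ j, (u j : A) = σ (h j) b := fun j => rfl
  have hsum : ∑ j, u j = ∑ _j : Fin m, bm := by
    have hc : ((∑ j, u j : M) : A) = ((∑ _j : Fin m, bm : M) : A) := by
      push_cast [hucoe]
      rw [← heq]
    exact Subtype.ext hc
  set Bf := Bform σ b c with hBf
  have e1 : ∀ j, Bf (u j) (u j) = Bf bm bm := fun j => Bform_invariant σ b c (h j) bm bm
  have e2 : ∑ j, Bf (u j) bm = ∑ _j : Fin m, Bf bm bm := by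
    have : ∑ j, Bf (u j) bm = Bf (∑ j, u j) bm := by
      rw [map_sum, LinearMap.coe_sum, Finset.sum_apply]
    rw [this, hsum, map_sum, LinearMap.coe_sum, Finset.sum_apply]
  have e3 : ∑ j, Bf bm (u j) = ∑ _j : Fin m, Bf bm bm := by
    rw [← map_sum, hsum, map_sum]
  have hzero : ∑ j, Bf (u j - bm) (u j - bm) = 0 := by
    have expand : ∀ j, Bf (u j - bm) (u j - bm)
        = Bf (u j) (u j) - Bf (u j) bm - Bf bm (u j) + Bf bm bm := by
      intro j
      simp only [map_sub, LinearMap.sub_apply]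
      ring
    calc ∑ j, Bf (u j - bm) (u j - bm)
        = ∑ j, (Bf (u j) (u j) - Bf (u j) bm - Bf bm (u j) + Bf bm bm) := by
          exact Finset.sum_congr rfl fun j _ => expand j
      _ = (∑ j, Bf (u j) (u j)) - (∑ j, Bf (u j) bm) - (∑ j, Bf bm (u j))
            + ∑ _j : Fin m, Bf bm bm := by
          rw [Finset.sum_add_distrib, Finset.sum_sub_distrib, Finset.sum_sub_distrib]
      _ = 0 := by
          rw [e2, e3, Finset.sum_congr rfl fun j _ => e1 j]
          ring
  have hterm : Bf (u j - bm) (u j - bm) = 0 :=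
    (Finset.sum_eq_zero_iff_of_nonneg (fun j _ => Bform_nonneg σ b c _)).mp hzero j
      (Finset.mem_univ _)
  have : u j - bm = 0 := Bform_eq_zero σ b c _ hterm
  have : u j = bm := by rwa [sub_eq_zero] at this
  have := congrArg (Subtype.val) this
  simpa [hucoe] using this

end Aux

/-- A finite sequence `(a 0, …, a (s-1))` of elements of `A` is `H`-dependent with respect
to the action `σ : H →* AddAut A` if there exist distinct indices `i 0, …, i (m-1)` (with
`m ≥ 1`) and (not necessarily distinct) nontrivial elements `h 0, …, h (m-1)` of `H` such
that `a (i 0) + ⋯ + a (i (m-1)) = (a (i 0))^(h 0) + ⋯ + (a (i (m-1)))^(h (m-1))`.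
Otherwise the sequence is `H`-independent. -/
def IsHDependent {A H : Type*} [AddCommGroup A] [Group H] (σ : H →* Multiplicative (AddAut A))
    {s : ℕ} (a : Fin s → A) : Prop :=
  ∃ (m : ℕ) (i : Fin m → Fin s) (h : Fin m → H),
    0 < m ∧ Function.Injective i ∧ (∀ j, h j ≠ 1) ∧
      ∑ j, a (i j) = ∑ j, Multiplicative.toAdd (σ (h j)) (a (i j))

/-- **Corollary 2.3.** Let `A` be a torsion-free abelian group and `H` a finite group acting
on `A` by automorphisms with `C_A(h) = 0` for all nontrivial `h ∈ H`. Then for every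
nonzero `b ∈ A` and every positive integer `s`, the constant sequence `(b, …, b)` of
length `s` is `H`-independent. -/
theorem constant_sequence_independent_of_torsion_free
    (A : Type*) [AddCommGroup A]
    (htf : ∀ (n : ℕ) (a : A), n ≠ 0 → n • a = 0 → a = 0)
    (H : Type*) [Group H] [Finite H] (σ : H →* Multiplicative (AddAut A))
    (hfree : ∀ h : H, h ≠ 1 → ∀ a : A, Multiplicative.toAdd (σ h) a = a → a = 0)
    (b : A) (hb : b ≠ 0) (s : ℕ) (hs : 0 < s) :
    ¬ IsHDependent σ (fun _ : Fin s => b) := by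
  intro hdep
  obtain ⟨m, i, h, hm, hi, hne, heq⟩ := hdep
  haveI : Fintype H := Fintype.ofFinite H
  haveI : NoZeroSMulDivisors ℤ A := by
    constructor
    intro n x hnx
    by_cases hn : n = 0
    · exact Or.inl hn
    · right
      apply htf n.natAbs x (by simpa using hn)
      have habs : |n| • x = 0 := by
        rcases abs_choice n with hc | hc <;> rw [hc]
        · exact hnx
        · rw [neg_smul, hnx, neg_zero]
      rw [← natCast_zsmul, ← Int.abs_eq_natAbs]
      exact habs
  have hkey : σ (h ⟨0, hm⟩) b = b := key σ b h heq ⟨0, hm⟩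
  exact hb (hfree _ (hne ⟨0, hm⟩) b hkey)
end

section
/- Let A be an abelian group and L an A-graded Lie algebra admitting a finite group H of double automorphisms such that for every nontrivial h ∈ H the automorphism of A induced by h fixes only the zero element of A, and such that C_L(H) is nilpotent of class at most c. Then L satisfies the c-th selective nilpotency condition: [L_{a_1}, L_{a_2}, …, L_{a_{c+1}}] = 0 (left-normed) for every H-independent sequence (a_1, a_2, …, a_{c+1}) of nonzero elements of A. -/
/-- Left-normed iterated Lie bracket of a list of elements:
`listBracket [x₁, x₂, …, xₙ] = [x₁, x₂, …, xₙ]` (left-normed); the empty list gives `0`.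
A Lie algebra is nilpotent of class at most `c` iff `listBracket xs = 0` for every
list `xs` of length `c + 1`. -/
def listBracket {L : Type*} [LieRing L] : List L → L
  | [] => 0
  | x :: ys => ys.foldl (fun a b => ⁅a, b⁆) x


lemma listBracket_singleton {L : Type*} [LieRing L] (x : L) : listBracket [x] = x := rfl

lemma listBracket_concat {L : Type*} [LieRing L] (l : List L) (hl : l ≠ []) (b : L) :
    listBracket (l ++ [b]) = ⁅listBracket l, b⁆ := by
  cases l with
  | nil => simp at hl
  | cons x ys => simp [listBracket, List.foldl_append]

lemma listBracket_snoc {L : Type*} [LieRing L] {n : ℕ} (x : Fin (n + 1) → L) (b : L) :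
    listBracket (List.ofFn (Fin.snoc x b : Fin (n + 2) → L)) = ⁅listBracket (List.ofFn x), b⁆ := by
  rw [List.ofFn_succ' (Fin.snoc x b)]
  have h1 : (fun i : Fin (n + 1) => (Fin.snoc x b : Fin (n+2) → L) i.castSucc) = x := by
    funext i; simp
  have h2 : (Fin.snoc x b : Fin (n+2) → L) (Fin.last (n+1)) = b := by simp
  rw [h1, h2, List.concat_eq_append, listBracket_concat]
  simp [← List.length_eq_zero_iff]

lemma listBracket_mem {R : Type*} [CommRing R] {L : Type*} [LieRing L] [LieAlgebra R L]
    {A : Type*} [AddCommGroup A] (Lc : A → Submodule R L)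
    (hgr : ∀ a b : A, ∀ x ∈ Lc a, ∀ y ∈ Lc b, ⁅x, y⁆ ∈ Lc (a + b)) :
    ∀ (n : ℕ) (x : Fin (n + 1) → L) (b : Fin (n + 1) → A),
      (∀ j, x j ∈ Lc (b j)) → listBracket (List.ofFn x) ∈ Lc (∑ j, b j) := by
  intro n
  induction n with
  | zero =>
    intro x b hx
    simpa [listBracket_singleton] using hx 0
  | succ n ih =>
    intro x b hx
    rw [← Fin.snoc_init_self x, listBracket_snoc, Fin.sum_univ_castSucc]
    exact hgr _ _ _ (ih (Fin.init x) (Fin.init b) (fun j => hx j.castSucc)) _ (hx (Fin.last _))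


lemma sum_lie' {L : Type*} [LieRing L] {ι : Type*} (s : Finset ι) (f : ι → L) (y : L) :
    ⁅∑ i ∈ s, f i, y⁆ = ∑ i ∈ s, ⁅f i, y⁆ :=
  map_sum (AddMonoidHom.mk' (fun x => ⁅x, y⁆) (fun a b => add_lie a b y)) f s

lemma lie_sum' {L : Type*} [LieRing L] {ι : Type*} (s : Finset ι) (f : ι → L) (y : L) :
    ⁅y, ∑ i ∈ s, f i⁆ = ∑ i ∈ s, ⁅y, f i⁆ :=
  map_sum (AddMonoidHom.mk' (fun x => ⁅y, x⁆) (fun a b => lie_add y a b)) f s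

lemma listBracket_expand {L : Type*} [LieRing L] {H : Type*} [Fintype H] :
    ∀ (n : ℕ) (y : Fin (n + 1) → H → L),
      listBracket (List.ofFn fun j => ∑ h, y j h)
        = ∑ f : Fin (n + 1) → H, listBracket (List.ofFn fun j => y j (f j)) := by
  intro n
  induction n with
  | zero =>
    intro y
    rw [show (List.ofFn fun j : Fin 1 => ∑ h, y j h) = [∑ h, y 0 h] by simp,
      listBracket_singleton]
    refine Fintype.sum_equiv (Equiv.funUnique (Fin 1) H).symm
      (fun h => y 0 h) (fun f => listBracket (List.ofFn fun j => y j (f j))) (fun h => ?_)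
    simp [listBracket_singleton, Fin.fin_one_eq_zero]
  | succ n ih =>
    intro y
    have key : (fun j : Fin (n + 2) => ∑ h, y j h)
        = Fin.snoc (fun j : Fin (n+1) => ∑ h, y j.castSucc h) (∑ h, y (Fin.last (n+1)) h) := by
      funext j
      induction j using Fin.lastCases <;> simp
    rw [key, listBracket_snoc, ih, sum_lie']
    simp only [lie_sum']
    rw [Finset.sum_comm]
    rw [← Equiv.sum_comp (Fin.snocEquiv (fun _ : Fin (n+2) => H))
      (fun f => listBracket (List.ofFn fun j => y j (f j))), Fintype.sum_prod_type]
    refine Finset.sum_congr rfl fun h _ => ?_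
    refine Finset.sum_congr rfl fun f _ => ?_
    have : (fun j : Fin (n+2) => y j ((Fin.snocEquiv (fun _ => H)) (h, f) j))
        = Fin.snoc (fun j : Fin (n+1) => y j.castSucc (f j)) (y (Fin.last (n+1)) h) := by
      funext j
      induction j using Fin.lastCases <;> simp [Fin.snocEquiv]
    rw [this, listBracket_snoc]

/-- **Selective nilpotency (proved inside Theorem 1.2).** Let `A` be an abelian group and
`L` an `A`-graded Lie algebra admitting a finite group `H` of double automorphisms with
`C_A(h) = 0` for all nontrivial `h ∈ H` and `C_L(H)` nilpotent of class at most `c`. Then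
`[L_{a 0}, …, L_{a c}] = 0` (left-normed) for every `H`-independent sequence
`(a 0, …, a c)` of nonzero elements of `A`. -/
theorem selective_nilpotency_of_double_automorphisms
    (R : Type*) [CommRing R] (L : Type*) [LieRing L] [LieAlgebra R L]
    (A : Type*) [AddCommGroup A] [DecidableEq A]
    (Lc : A → Submodule R L)
    (hint : DirectSum.IsInternal Lc)
    (hgr : ∀ a b : A, ∀ x ∈ Lc a, ∀ y ∈ Lc b, ⁅x, y⁆ ∈ Lc (a + b))
    (H : Type*) [Group H] [Finite H]
    (ρ : H →* (L ≃ₗ[R] L)) (σ : H →* Multiplicative (AddAut A))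
    (hbr : ∀ (h : H) (x y : L), ρ h ⁅x, y⁆ = ⁅ρ h x, ρ h y⁆)
    (hcomp : ∀ (h : H) (a : A), ⇑(ρ h) '' (Lc a : Set L) = (Lc (Multiplicative.toAdd (σ h) a) : Set L))
    (hfree : ∀ h : H, h ≠ 1 → ∀ a : A, Multiplicative.toAdd (σ h) a = a → a = 0)
    (c : ℕ)
    (hCL : ∀ xs : List L, xs.length = c + 1 → (∀ y ∈ xs, ∀ h : H, ρ h y = y) →
      listBracket xs = 0) :
    ∀ a : Fin (c + 1) → A, (∀ j, a j ≠ 0) → ¬ IsHDependent σ a →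
      ∀ x : Fin (c + 1) → L, (∀ j, x j ∈ Lc (a j)) →
        listBracket (List.ofFn x) = 0 := by
  classical
  have _inst : Fintype H := Fintype.ofFinite H
  intro a ha hindep x hx
  set b : A := ∑ j, a j with hb
  set X : Fin (c + 1) → L := fun j => ∑ h : H, ρ h (x j) with hXdef
  have hfix : ∀ (j : Fin (c + 1)) (g : H), ρ g (X j) = X j := by
    intro j g
    rw [hXdef]
    simp only [map_sum]
    refine Fintype.sum_equiv (Equiv.mulLeft g) _ _ (fun h => ?_)
    simp only [Equiv.coe_mulLeft, map_mul]
    rfl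
  have hzero : listBracket (List.ofFn X) = 0 := by
    apply hCL
    · simp
    · intro y hy g
      rw [List.mem_ofFn] at hy
      obtain ⟨j, rfl⟩ := hy
      exact hfix j g
  set T : (Fin (c + 1) → H) → L :=
    fun f => listBracket (List.ofFn fun j => ρ (f j) (x j)) with hTdef
  have hexp : (0 : L) = ∑ f : Fin (c + 1) → H, T f := by
    rw [← hzero, hXdef]
    exact listBracket_expand c (fun j h => ρ h (x j))
  have hgrade : ∀ f : Fin (c + 1) → H, T f ∈ Lc (∑ j, Multiplicative.toAdd (σ (f j)) (a j)) := by
    intro f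
    refine listBracket_mem Lc hgr c _ _ (fun j => ?_)
    have hmem : ρ (f j) (x j) ∈ (⇑(ρ (f j)) '' (Lc (a j) : Set L)) := ⟨x j, hx j, rfl⟩
    rw [hcomp] at hmem
    exact hmem
  have hne : ∀ f : Fin (c + 1) → H, f ≠ 1 → (∑ j, Multiplicative.toAdd (σ (f j)) (a j)) ≠ b := by
    intro f hf heq
    apply hindep
    set s : Finset (Fin (c + 1)) := Finset.univ.filter (fun j => f j ≠ 1) with hs
    have hsne : s.Nonempty := by
      rw [Finset.filter_nonempty_iff]
      by_contra hcon
      push_neg at hcon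
      exact hf (funext fun j => hcon j (Finset.mem_univ j))
    have hfix1 : ∑ j ∈ Finset.univ.filter (fun j => ¬ f j ≠ 1), Multiplicative.toAdd (σ (f j)) (a j)
        = ∑ j ∈ Finset.univ.filter (fun j => ¬ f j ≠ 1), a j := by
      refine Finset.sum_congr rfl (fun j hj => ?_)
      rw [Finset.mem_filter] at hj
      have : f j = 1 := not_not.mp hj.2
      rw [this, map_one]
      rfl
    have hsum : ∑ j ∈ s, Multiplicative.toAdd (σ (f j)) (a j) = ∑ j ∈ s, a j := by
      have h1 := Finset.sum_filter_add_sum_filter_not Finset.univ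
        (fun j => f j ≠ 1) (fun j => Multiplicative.toAdd (σ (f j)) (a j))
      have h2 := Finset.sum_filter_add_sum_filter_not Finset.univ
        (fun j => f j ≠ 1) (fun j => a j)
      have h3 : ∑ j, Multiplicative.toAdd (σ (f j)) (a j) = ∑ j, a j := by rw [heq, hb]
      rw [← h1, ← h2, hfix1] at h3
      exact add_right_cancel h3
    refine ⟨s.card, fun k => (s.equivFin.symm k : Fin (c + 1)),
      fun k => f (s.equivFin.symm k), Finset.card_pos.mpr hsne,
      fun k₁ k₂ hk => s.equivFin.symm.injective (Subtype.coe_injective hk),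
      fun k => ?_, ?_⟩
    · exact (Finset.mem_filter.mp (s.equivFin.symm k).2).2
    · have e1 : ∑ k : Fin s.card, a ((s.equivFin.symm k : Fin (c + 1)))
          = ∑ j ∈ s, a j := by
        rw [← Finset.sum_coe_sort s (fun j => a j)]
        exact Fintype.sum_equiv s.equivFin.symm _ _ (fun k => rfl)
      have e2 : ∑ k : Fin s.card, Multiplicative.toAdd (σ (f (s.equivFin.symm k))) (a ((s.equivFin.symm k : Fin (c + 1))))
          = ∑ j ∈ s, Multiplicative.toAdd (σ (f j)) (a j) := by
        rw [← Finset.sum_coe_sort s (fun j => Multiplicative.toAdd (σ (f j)) (a j))]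
        exact Fintype.sum_equiv s.equivFin.symm _ _ (fun k => rfl)
      rw [e1, e2, hsum]
  have h1T : T 1 = listBracket (List.ofFn x) := by
    have hfun : (fun j => ρ ((1 : Fin (c + 1) → H) j) (x j)) = x := by
      funext j
      simp
    rw [hTdef]
    simp only [hfun]
  rw [← Finset.add_sum_erase Finset.univ T (Finset.mem_univ 1)] at hexp
  have hT1 : T 1 = - ∑ f ∈ Finset.univ.erase 1, T f :=
    eq_neg_of_add_eq_zero_left hexp.symm
  set K : Submodule R L := ⨆ (a' : A) (_ : a' ≠ b), Lc a' with hK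
  have hz2 : T 1 ∈ K := by
    rw [hT1]
    refine K.neg_mem (Submodule.sum_mem K (fun f hf => ?_))
    have hfne : f ≠ 1 := Finset.ne_of_mem_erase hf
    have hle : Lc (∑ j, Multiplicative.toAdd (σ (f j)) (a j)) ≤ K :=
      le_iSup₂ (f := fun (a' : A) (_ : a' ≠ b) => Lc a') _ (hne f hfne)
    exact hle (hgrade f)
  have hz1 : T 1 ∈ Lc b := by
    rw [h1T]
    exact listBracket_mem Lc hgr c x a hx
  have hdisj : Disjoint (Lc b) K := by
    have := hint.submodule_iSupIndep (i := b)
    exact this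
  rw [← h1T]
  exact (Submodule.disjoint_def.mp hdisj) _ hz1 hz2
end
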